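/- Let a > 0, Δ > 0, c ∈ ℝ, and define g(E) = ∫_E^{E+Δ} e^{−a(x−c)²} dx. Let n ≥ 1, M > 0, let E₁, …, E_n ∈ [−M, M], fix E ∈ ℝ, and set β = (d/dE') log g(E') evaluated at E' = E. Define p_k = g(E − E_k) / Σ_{l=1}^n g(E − E_l) and q_k = e^{−βE_k} / Σ_{l=1}^n e^{−βE_l}. Then ½ Σ_{k=1}^n |p_k − q_k| ≤ ½ (e^{aM²} − 1). -/

import Mathlib

lemma tv_aux {ι : Type*} [Fintype ι] [Nonempty ι] (w v : ι → ℝ) (lam : ℝ)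
    (hlam : 1 < lam) (hv : ∀ k, 0 < v k) (hw : ∀ k, 0 < w k)
    (h1 : ∀ k, w k ≤ lam * v k) (h2 : ∀ k, v k ≤ lam * w k) :
    ∑ k, |w k / (∑ l, w l) - v k / (∑ l, v l)| ≤ lam - 1 := by
  have hlam0 : (0:ℝ) < lam := lt_trans one_pos hlam
  set W := ∑ l, w l with hWdef
  set V := ∑ l, v l with hVdef
  have hW : 0 < W := Finset.sum_pos (fun i _ => hw i) Finset.univ_nonempty
  have hV : 0 < V := Finset.sum_pos (fun i _ => hv i) Finset.univ_nonempty
  set s := V / W with hsdef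
  have hs : 0 < s := div_pos hV hW
  have hsW : s * W = V := div_mul_cancel₀ V (ne_of_gt hW)
  set X : ι → ℝ := fun k => w k * V / (v k * W) with hXdef
  set q : ι → ℝ := fun k => v k / V with hqdef
  have hq0 : ∀ k, 0 < q k := fun k => div_pos (hv k) hV
  set m := s / lam with hmdef
  set Mb := s * lam with hMbdef
  have hm0 : 0 < m := div_pos hs hlam0
  have hmlam : m * lam = s := div_mul_cancel₀ s (ne_of_gt hlam0)
  -- pointwise ratio bounds
  have hXlow : ∀ k, m ≤ X k := by
    intro k
    simp only [hXdef]
    rw [le_div_iff₀ (mul_pos (hv k) hW)]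
    calc m * (v k * W) = m * v k * W := by ring
      _ ≤ m * (lam * w k) * W :=
        mul_le_mul_of_nonneg_right (mul_le_mul_of_nonneg_left (h2 k) hm0.le) hW.le
      _ = w k * (s * W) := by rw [← hmlam]; ring
      _ = w k * V := by rw [hsW]
  have hXhigh : ∀ k, X k ≤ Mb := by
    intro k
    simp only [hXdef]
    rw [div_le_iff₀ (mul_pos (hv k) hW)]
    calc w k * V = w k * (s * W) := by rw [hsW]
      _ = w k * s * W := by ring
      _ ≤ lam * v k * s * W :=
        mul_le_mul_of_nonneg_right (mul_le_mul_of_nonneg_right (h1 k) hs.le) hW.le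
      _ = Mb * (v k * W) := by rw [hMbdef]; ring
  -- sums
  have hsumq : ∑ k, q k = 1 := by
    simp only [hqdef]; rw [← Finset.sum_div]; exact div_self (ne_of_gt hV)
  have hsumqX : ∑ k, q k * X k = 1 := by
    have key : ∀ k, q k * X k = w k / W := by
      intro k
      simp only [hqdef, hXdef]
      field_simp [ne_of_gt (hv k), ne_of_gt hV, ne_of_gt hW]
    rw [Finset.sum_congr rfl (fun k _ => key k), ← Finset.sum_div]
    exact div_self (ne_of_gt hW)
  have hm1 : m ≤ 1 := by
    have h := Finset.sum_le_sum
      (fun k (_ : k ∈ Finset.univ) => mul_le_mul_of_nonneg_left (hXlow k) (le_of_lt (hq0 k)))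
    rw [hsumqX] at h
    have h2' : ∑ k, q k * m = m := by rw [← Finset.sum_mul, hsumq, one_mul]
    linarith [h2' ▸ h]
  have hMb1 : 1 ≤ Mb := by
    have h := Finset.sum_le_sum
      (fun k (_ : k ∈ Finset.univ) => mul_le_mul_of_nonneg_left (hXhigh k) (le_of_lt (hq0 k)))
    rw [hsumqX] at h
    have h2' : ∑ k, q k * Mb = Mb := by rw [← Finset.sum_mul, hsumq, one_mul]
    linarith [h2' ▸ h]
  -- rewrite the TV sum
  have hrw : ∀ k, |w k / W - v k / V| = q k * |X k - 1| := by
    intro k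
    have h : q k * (X k - 1) = w k / W - v k / V := by
      simp only [hqdef, hXdef]
      field_simp [ne_of_gt (hv k), ne_of_gt hV, ne_of_gt hW]
    rw [← h, abs_mul, abs_of_pos (hq0 k)]
  rw [Finset.sum_congr rfl (fun k _ => hrw k)]
  -- chord bound pointwise
  have hchord : ∀ k, (Mb - m) * (q k * |X k - 1|) ≤
      q k * ((Mb - 1) * (X k - m) + (1 - m) * (Mb - X k)) := by
    intro k
    have hq := le_of_lt (hq0 k)
    have hl := hXlow k
    have hh := hXhigh k
    rcases le_or_gt (X k) 1 with hc | hc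
    · rw [abs_of_nonpos (by linarith)]
      nlinarith [mul_nonneg hq (mul_nonneg (by linarith : (0:ℝ) ≤ Mb - 1)
        (by linarith : (0:ℝ) ≤ X k - m))]
    · rw [abs_of_pos (by linarith)]
      nlinarith [mul_nonneg hq (mul_nonneg (by linarith : (0:ℝ) ≤ 1 - m)
        (by linarith : (0:ℝ) ≤ Mb - X k))]
  -- sum the chord bound
  have hsum2 : ∑ k, q k * ((Mb - 1) * (X k - m) + (1 - m) * (Mb - X k))
      = 2 * (Mb - 1) * (1 - m) := by
    have expand : ∀ k, q k * ((Mb - 1) * (X k - m) + (1 - m) * (Mb - X k))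
        = ((Mb - 1) - (1 - m)) * (q k * X k) + ((1 - m) * Mb - (Mb - 1) * m) * q k := by
      intro k; ring
    rw [Finset.sum_congr rfl (fun k _ => expand k), Finset.sum_add_distrib,
      ← Finset.mul_sum, ← Finset.mul_sum, hsumq, hsumqX]
    ring
  have hkey : (Mb - m) * ∑ k, q k * |X k - 1| ≤ 2 * (Mb - 1) * (1 - m) := by
    rw [Finset.mul_sum]
    calc ∑ k, (Mb - m) * (q k * |X k - 1|)
        ≤ ∑ k, q k * ((Mb - 1) * (X k - m) + (1 - m) * (Mb - X k)) :=
          Finset.sum_le_sum (fun k _ => hchord k)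
      _ = 2 * (Mb - 1) * (1 - m) := hsum2
  -- algebra: 2 (Mb-1)(1-m) ≤ (lam - 1)(Mb - m)
  have halg : 2 * (Mb - 1) * (1 - m) ≤ (lam - 1) * (Mb - m) := by
    have key : lam * ((lam - 1) * (Mb - m) - 2 * (Mb - 1) * (1 - m))
        = m * lam * (lam - 1) ^ 3 + 2 * lam * (m * lam - 1) ^ 2 := by
      rw [hMbdef, ← hmlam]; ring
    have hpos : 0 ≤ lam * ((lam - 1) * (Mb - m) - 2 * (Mb - 1) * (1 - m)) := by
      rw [key]
      have : (0:ℝ) ≤ m * lam * (lam - 1) ^ 3 :=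
        mul_nonneg (mul_nonneg hm0.le hlam0.le) (pow_nonneg (by linarith) 3)
      nlinarith [sq_nonneg (m * lam - 1), hlam0.le]
    nlinarith [hpos, hlam0]
  have hMm : 0 < Mb - m := by
    rw [hMbdef, hmdef, sub_pos, div_lt_iff₀ hlam0]
    nlinarith
  have hfin : (Mb - m) * ∑ k, q k * |X k - 1| ≤ (Mb - m) * (lam - 1) := by
    calc (Mb - m) * ∑ k, q k * |X k - 1| ≤ 2 * (Mb - 1) * (1 - m) := hkey
      _ ≤ (lam - 1) * (Mb - m) := halg
      _ = (Mb - m) * (lam - 1) := by ring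
  exact le_of_mul_le_mul_left hfin hMm

open intervalIntegral MeasureTheory

lemma gaussian_log_taylor (a Δ c : ℝ) (ha : 0 < a) (hΔ : 0 < Δ)
    (g : ℝ → ℝ) (hg : ∀ E, g E = ∫ x in E..(E + Δ), Real.exp (-a * (x - c) ^ 2))
    (E y : ℝ) :
    |Real.log (g y) - Real.log (g E) - deriv (fun E' => Real.log (g E')) E * (y - E)|
      ≤ a * (y - E) ^ 2 := by
  set w : ℝ → ℝ := fun x => Real.exp (-a * (x - c) ^ 2) with hwdef
  have hwc : Continuous w := by
    apply Real.continuous_exp.comp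
    fun_prop
  have hwpos : ∀ x, 0 < w x := fun x => Real.exp_pos _
  have hwint : ∀ p q : ℝ, IntervalIntegrable w volume p q :=
    fun p q => hwc.intervalIntegrable p q
  have hw' : ∀ x, HasDerivAt w (-(2 * a) * ((x - c) * w x)) x := by
    intro x
    have h1 : HasDerivAt (fun u : ℝ => -a * (u - c) ^ 2) (-a * (2 * (x - c) ^ 1 * 1)) x :=
      (((hasDerivAt_id x).sub_const c).pow 2).const_mul (-a)
    have h2 := h1.exp
    convert h2 using 1
    simp only [hwdef]
    ring
  set A : ℝ → ℝ := fun t => ∫ x in c..t, w x with hAdef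
  have hA : ∀ t, HasDerivAt A (w t) t := fun t =>
    intervalIntegral.integral_hasDerivAt_right (hwint c t)
      (hwc.stronglyMeasurableAtFilter _ _) hwc.continuousAt
  have hgA : ∀ t, g t = A (t + Δ) - A t := by
    intro t
    rw [hg t, hAdef]
    rw [intervalIntegral.integral_interval_sub_left (hwint c (t + Δ)) (hwint c t)]
  have hgJ : ∀ t, g t = ∫ x in t..(t + Δ), w x := by
    intro t
    rw [hgA t, hAdef,
      intervalIntegral.integral_interval_sub_left (hwint c (t + Δ)) (hwint c t)]
  have hgpos : ∀ t, 0 < g t := by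
    intro t
    rw [hgJ t]
    exact intervalIntegral.intervalIntegral_pos_of_pos (hwint t (t + Δ)) hwpos (by linarith)
  set g1 : ℝ → ℝ := fun t => w (t + Δ) - w t with hg1def
  have hshift : ∀ t, HasDerivAt (fun u : ℝ => w (u + Δ)) (-(2 * a) * ((t + Δ - c) * w (t + Δ))) t := by
    intro t
    have := (hw' (t + Δ)).comp t ((hasDerivAt_id t).add_const Δ)
    simpa [Function.comp_def] using this
  have hg' : ∀ t, HasDerivAt g (g1 t) t := by
    intro t
    have h1 : HasDerivAt (fun u : ℝ => A (u + Δ)) (w (t + Δ)) t := by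
      have := (hA (t + Δ)).comp t ((hasDerivAt_id t).add_const Δ)
      simpa [Function.comp_def] using this
    have h2 := h1.sub (hA t)
    exact h2.congr_of_eventuallyEq (Filter.Eventually.of_forall hgA)
  set gd : ℝ → ℝ := fun t =>
    -(2 * a) * ((t + Δ - c) * w (t + Δ)) - -(2 * a) * ((t - c) * w t) with hgddef
  have hg1' : ∀ t, HasDerivAt g1 (gd t) t := fun t => (hshift t).sub (hw' t)
  -- continuity of moment integrands
  have hc1 : Continuous (fun x : ℝ => (x - c) * w x) :=
    (continuous_id.sub continuous_const).mul hwc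
  have hc2 : Continuous (fun x : ℝ => (x - c) ^ 2 * w x) :=
    ((continuous_id.sub continuous_const).pow 2).mul hwc
  -- key bound on the numerator of the derivative of g1/g
  have hDbound : ∀ t, gd t * g t - g1 t * g1 t ≤ 0 ∧
      -(2 * a) * g t ^ 2 ≤ gd t * g t - g1 t * g1 t := by
    intro t
    set J0 : ℝ := ∫ x in t..(t + Δ), w x with hJ0def
    set J1 : ℝ := ∫ x in t..(t + Δ), (x - c) * w x with hJ1def
    set J2 : ℝ := ∫ x in t..(t + Δ), (x - c) ^ 2 * w x with hJ2def
    have hgJ0 : g t = J0 := hgJ t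
    have hJ0pos : 0 < J0 := hgJ0 ▸ hgpos t
    -- first identity: -(2a) J1 = w(t+Δ) - w t
    have hI1 : -(2 * a) * J1 = w (t + Δ) - w t := by
      have h := intervalIntegral.integral_eq_sub_of_hasDerivAt
        (f := w) (f' := fun x => -(2 * a) * ((x - c) * w x))
        (fun x _ => hw' x) ((continuous_const.mul hc1).intervalIntegrable t (t + Δ))
      rw [intervalIntegral.integral_const_mul] at h
      exact h
    -- integration by parts identity, for any shift μm
    have hIBP : ∀ μm : ℝ, J0 + -(2 * a) * J2 + (2 * a * μm) * J1
        = (t + Δ - (c + μm)) * w (t + Δ) - (t - (c + μm)) * w t := by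
      intro μm
      have hd : ∀ x : ℝ, HasDerivAt (fun u => (u - (c + μm)) * w u)
          (w x + -(2 * a) * ((x - c) ^ 2 * w x) + (2 * a * μm) * ((x - c) * w x)) x := by
        intro x
        have h := ((hasDerivAt_id x).sub_const (c + μm)).mul (hw' x)
        simp only [id_eq] at h
        exact h.congr_deriv (by ring)
      have h := intervalIntegral.integral_eq_sub_of_hasDerivAt (fun x _ => hd x)
        (((hwint t (t + Δ)).add
            ((continuous_const.mul hc2).intervalIntegrable t (t + Δ))).add
          ((continuous_const.mul hc1).intervalIntegrable t (t + Δ)))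
      rw [intervalIntegral.integral_add
            ((hwint t (t + Δ)).add ((continuous_const.fun_mul hc2).intervalIntegrable t (t + Δ)))
            ((continuous_const.fun_mul hc1).intervalIntegrable t (t + Δ)),
          intervalIntegral.integral_add (hwint t (t + Δ))
            ((continuous_const.fun_mul hc2).intervalIntegrable t (t + Δ)),
          intervalIntegral.integral_const_mul, intervalIntegral.integral_const_mul] at h
      exact h
    -- mean bounds
    have hJ1low : (t - c) * J0 ≤ J1 := by
      have h := intervalIntegral.integral_mono_on (μ := MeasureTheory.volume)
        (f := fun x => (t - c) * w x) (g := fun x => (x - c) * w x)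
        (by linarith : t ≤ t + Δ)
        ((continuous_const.mul hwc).intervalIntegrable t (t + Δ))
        (hc1.intervalIntegrable t (t + Δ))
        (fun x hx => mul_le_mul_of_nonneg_right (sub_le_sub_right hx.1 c) (hwpos x).le)
      rwa [intervalIntegral.integral_const_mul] at h
    have hJ1high : J1 ≤ (t + Δ - c) * J0 := by
      have h := intervalIntegral.integral_mono_on (μ := MeasureTheory.volume)
        (f := fun x => (x - c) * w x) (g := fun x => (t + Δ - c) * w x)
        (by linarith : t ≤ t + Δ)
        (hc1.intervalIntegrable t (t + Δ))
        ((continuous_const.mul hwc).intervalIntegrable t (t + Δ))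
        (fun x hx => mul_le_mul_of_nonneg_right (sub_le_sub_right hx.2 c) (hwpos x).le)
      rwa [intervalIntegral.integral_const_mul] at h
    -- variance nonnegativity
    set μ : ℝ := J1 / J0 with hμdef
    have hμJ : μ * J0 = J1 := div_mul_cancel₀ J1 (ne_of_gt hJ0pos)
    have hvar : 0 ≤ J0 * J2 - J1 ^ 2 := by
      have h0 : 0 ≤ ∫ x in t..(t + Δ),
          ((x - c) ^ 2 * w x + (-(2 * μ)) * ((x - c) * w x) + μ ^ 2 * w x) := by
        apply intervalIntegral.integral_nonneg (by linarith)
        intro x _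
        nlinarith [mul_nonneg (sq_nonneg ((x - c) - μ)) (hwpos x).le]
      rw [intervalIntegral.integral_add
            ((hc2.intervalIntegrable t (t + Δ)).add
              ((continuous_const.fun_mul hc1).intervalIntegrable t (t + Δ)))
            ((continuous_const.fun_mul hwc).intervalIntegrable t (t + Δ)),
          intervalIntegral.integral_add (hc2.intervalIntegrable t (t + Δ))
            ((continuous_const.fun_mul hc1).intervalIntegrable t (t + Δ)),
          intervalIntegral.integral_const_mul, intervalIntegral.integral_const_mul] at h0
      -- h0 : 0 ≤ J2 + (-(2μ)) * J1 + μ^2 * J0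
      have e1 : μ * J0 * J1 = J1 ^ 2 := by rw [hμJ]; ring
      have e2 : μ ^ 2 * J0 ^ 2 = J1 ^ 2 := by
        rw [show μ ^ 2 * J0 ^ 2 = (μ * J0) ^ 2 by ring, hμJ]
      nlinarith [mul_nonneg hJ0pos.le h0, e1, e2]
    -- second moment upper bound
    have hub : 0 ≤ J0 ^ 2 - 2 * a * (J0 * J2 - J1 ^ 2) := by
      have hμlow : t - c ≤ μ := by
        rw [hμdef, le_div_iff₀ hJ0pos]
        exact hJ1low
      have hμhigh : μ ≤ t + Δ - c := by
        rw [hμdef, div_le_iff₀ hJ0pos]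
        exact hJ1high
      have h := hIBP μ
      have hrhs : 0 ≤ (t + Δ - (c + μ)) * w (t + Δ) - (t - (c + μ)) * w t := by
        have h1 : 0 ≤ (t + Δ - (c + μ)) * w (t + Δ) :=
          mul_nonneg (by linarith) (hwpos _).le
        have h2 : (t - (c + μ)) * w t ≤ 0 :=
          mul_nonpos_of_nonpos_of_nonneg (by linarith) (hwpos t).le
        linarith
      -- 0 ≤ J0 - 2a J2 + 2a μ J1 ; multiply by J0
      have h3 : 0 ≤ J0 + -(2 * a) * J2 + (2 * a * μ) * J1 := h ▸ hrhs
      have e1 : μ * J0 * J1 = J1 ^ 2 := by rw [hμJ]; ring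
      nlinarith [mul_nonneg hJ0pos.le h3, e1]
    -- compute g1 and gd in terms of moments
    have hg1J : g1 t = -(2 * a) * J1 := by rw [hg1def]; exact hI1.symm
    have hgdJ : gd t = -(2 * a) * (J0 + -(2 * a) * J2) := by
      have h := hIBP 0
      simp only [hgddef]
      rw [show -(2 * a) * ((t + Δ - c) * w (t + Δ)) - -(2 * a) * ((t - c) * w t)
          = -(2 * a) * ((t + Δ - (c + 0)) * w (t + Δ) - (t - (c + 0)) * w t) from by ring,
        ← h]
      ring
    constructor
    · rw [hg1J, hgdJ, hgJ0]
      nlinarith [mul_nonneg ha.le hub]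
    · rw [hg1J, hgdJ, hgJ0]
      nlinarith [mul_nonneg (mul_nonneg ha.le ha.le) hvar]
  -- derivative of the log-derivative LD = g1/g
  set LD : ℝ → ℝ := fun t => g1 t / g t with hLDdef
  have hLD' : ∀ t, HasDerivAt LD ((gd t * g t - g1 t * g1 t) / g t ^ 2) t := fun t =>
    (hg1' t).div (hg' t) (ne_of_gt (hgpos t))
  have hderiv_log : deriv (fun E' => Real.log (g E')) E = LD E :=
    ((hg' E).log (ne_of_gt (hgpos E))).deriv
  rw [hderiv_log]
  -- monotonicity helper
  have taylor_half : ∀ F F1 : ℝ → ℝ, (∀ t, HasDerivAt F (F1 t) t) →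
      Monotone F1 → F1 E = 0 → F E ≤ F y := by
    intro F F1 hF hmono hFE
    rcases le_total E y with hEy | hEy
    · have hmonoF : MonotoneOn F (Set.Icc E y) := by
        apply monotoneOn_of_deriv_nonneg (convex_Icc E y)
        · exact fun t _ => (hF t).differentiableAt.continuousAt.continuousWithinAt
        · exact fun t _ => (hF t).differentiableAt.differentiableWithinAt
        · intro t ht
          rw [interior_Icc] at ht
          rw [(hF t).deriv]
          have := hmono (le_of_lt ht.1)
          linarith [hFE ▸ this]
      exact hmonoF (Set.left_mem_Icc.2 hEy) (Set.right_mem_Icc.2 hEy) hEy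
    · have hantiF : AntitoneOn F (Set.Icc y E) := by
        apply antitoneOn_of_deriv_nonpos (convex_Icc y E)
        · exact fun t _ => (hF t).differentiableAt.continuousAt.continuousWithinAt
        · exact fun t _ => (hF t).differentiableAt.differentiableWithinAt
        · intro t ht
          rw [interior_Icc] at ht
          rw [(hF t).deriv]
          have := hmono (le_of_lt ht.2)
          linarith [hFE ▸ this]
      exact hantiF (Set.left_mem_Icc.2 hEy) (Set.right_mem_Icc.2 hEy) hEy
  -- lower bound function
  have hφ1' : ∀ t, HasDerivAt (fun t => LD t - LD E + 2 * a * (t - E))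
      ((gd t * g t - g1 t * g1 t) / g t ^ 2 + 2 * a) t := by
    intro t
    have h := ((hLD' t).sub_const (LD E)).add
      (((hasDerivAt_id t).sub_const E).const_mul (2 * a))
    simp only [id_eq] at h
    exact h.congr_deriv (by ring)
  have hφ1mono : Monotone (fun t => LD t - LD E + 2 * a * (t - E)) := by
    apply monotone_of_deriv_nonneg (fun t => (hφ1' t).differentiableAt)
    intro t
    rw [(hφ1' t).deriv]
    have h2 : (0:ℝ) < g t ^ 2 := pow_pos (hgpos t) 2
    have hlow := (hDbound t).2
    have : -(2 * a) ≤ (gd t * g t - g1 t * g1 t) / g t ^ 2 :=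
      (le_div_iff₀ h2).2 (by linarith)
    linarith
  have hψ1' : ∀ t, HasDerivAt (fun t => -LD t + LD E + 2 * a * (t - E))
      (-((gd t * g t - g1 t * g1 t) / g t ^ 2) + 2 * a) t := by
    intro t
    have h := ((hLD' t).neg.add_const (LD E)).add
      (((hasDerivAt_id t).sub_const E).const_mul (2 * a))
    simp only [id_eq] at h
    exact h.congr_deriv (by ring)
  have hψ1mono : Monotone (fun t => -LD t + LD E + 2 * a * (t - E)) := by
    apply monotone_of_deriv_nonneg (fun t => (hψ1' t).differentiableAt)
    intro t
    rw [(hψ1' t).deriv]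
    have h2 : (0:ℝ) < g t ^ 2 := pow_pos (hgpos t) 2
    have hD0 : (gd t * g t - g1 t * g1 t) / g t ^ 2 ≤ 0 :=
      div_nonpos_of_nonpos_of_nonneg (hDbound t).1 h2.le
    linarith
  have hφ' : ∀ t, HasDerivAt (fun t => Real.log (g t) - LD E * t + a * (t - E) ^ 2)
      (LD t - LD E + 2 * a * (t - E)) t := by
    intro t
    have h1 := (hg' t).log (ne_of_gt (hgpos t))
    have h2 := (hasDerivAt_id t).const_mul (LD E)
    have h3 := (((hasDerivAt_id t).sub_const E).pow 2).const_mul a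
    have h := (h1.sub h2).add h3
    simp only [id_eq] at h
    exact h.congr_deriv (by simp only [hLDdef]; push_cast; ring)
  have hψ' : ∀ t, HasDerivAt (fun t => -Real.log (g t) + LD E * t + a * (t - E) ^ 2)
      (-LD t + LD E + 2 * a * (t - E)) t := by
    intro t
    have h1 := ((hg' t).log (ne_of_gt (hgpos t))).neg
    have h2 := (hasDerivAt_id t).const_mul (LD E)
    have h3 := (((hasDerivAt_id t).sub_const E).pow 2).const_mul a
    have h := (h1.add h2).add h3
    simp only [id_eq] at h
    exact h.congr_deriv (by simp only [hLDdef]; push_cast; ring)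
  have low := taylor_half _ _ hφ' hφ1mono (by ring)
  have high := taylor_half _ _ hψ' hψ1mono (by ring)
  have hEE : a * (E - E) ^ 2 = 0 := by ring
  rw [abs_le]
  constructor
  · nlinarith [high]
  · nlinarith [low]

/-- the reduced state weights obtained from a Gaussian density
of bath states are close in total variation to the Gibbs weights at the
inverse temperature `β = (log g)'(E)`. -/
theorem gaussian_window_gibbs_approx (a Δ c : ℝ) (ha : 0 < a) (hΔ : 0 < Δ)
    (g : ℝ → ℝ) (hg : ∀ E, g E = ∫ x in E..(E + Δ), Real.exp (-a * (x - c) ^ 2))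
    {ι : Type*} [Fintype ι] [Nonempty ι] (M : ℝ) (hM : 0 < M)
    (Es : ι → ℝ) (hEs : ∀ k, Es k ∈ Set.Icc (-M) M)
    (E β : ℝ) (hβ : β = deriv (fun E' => Real.log (g E')) E)
    (p q : ι → ℝ)
    (hp : ∀ k, p k = g (E - Es k) / ∑ l, g (E - Es l))
    (hq : ∀ k, q k = Real.exp (-β * Es k) / ∑ l, Real.exp (-β * Es l)) :
    (1 / 2) * ∑ k, |p k - q k| ≤ (1 / 2) * (Real.exp (a * M ^ 2) - 1) := by
  have hlam : (1:ℝ) < Real.exp (a * M ^ 2) := by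
    rw [show (1:ℝ) = Real.exp 0 from Real.exp_zero.symm]
    exact Real.exp_lt_exp.2 (by positivity)
  have hgpos : ∀ t, 0 < g t := by
    intro t
    rw [hg t]
    apply intervalIntegral.intervalIntegral_pos_of_pos
    · exact Continuous.intervalIntegrable (by fun_prop) _ _
    · exact fun x => Real.exp_pos _
    · linarith
  set lam := Real.exp (a * M ^ 2) with hlamdef
  set wgt : ι → ℝ := fun k => g (E - Es k) with hwgt
  set vgt : ι → ℝ := fun k => g E * Real.exp (-β * Es k) with hvgt
  have hwpos : ∀ k, 0 < wgt k := fun k => hgpos _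
  have hvpos : ∀ k, 0 < vgt k := fun k => mul_pos (hgpos E) (Real.exp_pos _)
  have hbound : ∀ k, a * ((E - Es k) - E) ^ 2 ≤ a * M ^ 2 := by
    intro k
    have hsq : ((E - Es k) - E) ^ 2 ≤ M ^ 2 := by
      nlinarith [mul_nonneg (by linarith [(hEs k).1] : (0:ℝ) ≤ Es k + M)
        (by linarith [(hEs k).2] : (0:ℝ) ≤ M - Es k)]
    exact mul_le_mul_of_nonneg_left hsq ha.le
  have hloglem : ∀ k,
      |Real.log (wgt k) - Real.log (g E) - β * ((E - Es k) - E)| ≤ a * ((E - Es k) - E) ^ 2 := by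
    intro k
    have h := gaussian_log_taylor a Δ c ha hΔ g hg E (E - Es k)
    rw [← hβ] at h
    exact h
  have h1 : ∀ k, wgt k ≤ lam * vgt k := by
    intro k
    have hl := (abs_le.1 (hloglem k)).2
    have e : β * ((E - Es k) - E) = -β * Es k := by ring
    have hup : Real.log (wgt k) ≤ Real.log (g E) + -β * Es k + a * M ^ 2 := by
      linarith [hbound k, e ▸ hl]
    calc wgt k = Real.exp (Real.log (wgt k)) := (Real.exp_log (hwpos k)).symm
      _ ≤ Real.exp (Real.log (g E) + -β * Es k + a * M ^ 2) := Real.exp_le_exp.2 hup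
      _ = lam * vgt k := by
          rw [Real.exp_add, Real.exp_add, Real.exp_log (hgpos E), hvgt, hlamdef]
          ring
  have h2 : ∀ k, vgt k ≤ lam * wgt k := by
    intro k
    have hl := (abs_le.1 (hloglem k)).1
    have e : β * ((E - Es k) - E) = -β * Es k := by ring
    have hup : Real.log (g E) + -β * Es k ≤ Real.log (wgt k) + a * M ^ 2 := by
      linarith [hbound k, e ▸ hl]
    calc vgt k = Real.exp (Real.log (g E) + -β * Es k) := by
          rw [Real.exp_add, Real.exp_log (hgpos E), hvgt]
      _ ≤ Real.exp (Real.log (wgt k) + a * M ^ 2) := Real.exp_le_exp.2 hup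
      _ = lam * wgt k := by
          rw [Real.exp_add, Real.exp_log (hwpos k), hlamdef]
          ring
  have hq' : ∀ k, q k = vgt k / ∑ l, vgt l := by
    intro k
    rw [hq k]
    simp only [hvgt]
    rw [← Finset.mul_sum, mul_div_mul_left _ _ (ne_of_gt (hgpos E))]
  have htv := tv_aux wgt vgt lam hlam hvpos hwpos h1 h2
  have hsum : ∑ k, |p k - q k| = ∑ k, |wgt k / (∑ l, wgt l) - vgt k / (∑ l, vgt l)| := by
    apply Finset.sum_congr rfl
    intro k _
    rw [hp k, hq' k]
  rw [hsum]
  linarith [htv]
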